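/- Fix a finite set Θ and real numbers p̂(θ) ∈ [0,1] for θ ∈ Θ with maximizer θ_max (so p̂_max := p̂(θ_max) ≥ p̂(θ) for all θ). Let I_θ^b ∈ {0,1}, b = 1,...,B, be i.i.d. random indicator vectors (I_θ^b)_{θ∈Θ} with marginals E[I_θ^b] = p̂(θ), and set p̄(θ) := (1/B)Σ_{b=1}^B I_θ^b. Then for every θ ∈ Θ: P(p̄(θ) ≥ p̄(θ_max)) ≤ exp( −(B/6)·(p̂_max − p̂(θ))² / (min{p̂_max, 1−p̂_max} + p̂_max − p̂(θ)) ). -/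

import Mathlib

set_option autoImplicit false

open MeasureTheory ProbabilityTheory Real
open scoped ENNReal Classical

set_option maxHeartbeats 1000000

private lemma aux_key {Δ m : ℝ} (hΔ : 0 < Δ) (hm : 0 ≤ m) :
    -(Δ / (2 * m + 4 * Δ / 3) * Δ) +
      (Δ / (2 * m + 4 * Δ / 3)) ^ 2 / (2 * (1 - Δ / (2 * m + 4 * Δ / 3) / 3)) * (2 * m + Δ)
      ≤ -(Δ ^ 2 / (6 * (m + Δ))) := by
  have hd : 0 < 2 * m + 4 * Δ / 3 := by linarith
  have h2mD : 0 < 2 * m + Δ := by linarith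
  have hmD : 0 < m + Δ := by linarith
  have h13 : 1 - Δ / (2 * m + 4 * Δ / 3) / 3 = (2 * m + Δ) / (2 * m + 4 * Δ / 3) := by
    field_simp; ring
  have e : -(Δ / (2 * m + 4 * Δ / 3) * Δ) +
      (Δ / (2 * m + 4 * Δ / 3)) ^ 2 / (2 * ((2 * m + Δ) / (2 * m + 4 * Δ / 3))) * (2 * m + Δ)
      = -(Δ ^ 2 / (2 * (2 * m + 4 * Δ / 3))) := by
    field_simp; ring
  rw [h13, e, neg_le_neg_iff, div_le_div_iff₀ (by linarith) (by linarith)]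
  nlinarith [sq_nonneg Δ]

private lemma aux_key2 (b Δ m : ℝ) (h : m + Δ ≠ 0) :
    b * (-(Δ ^ 2 / (6 * (m + Δ)))) = -(b / 6) * Δ ^ 2 / (m + Δ) := by
  field_simp

private lemma aux_exp_pos {t : ℝ} (h0 : 0 ≤ t) (h1 : t ≤ 1) :
    Real.exp t ≤ 1 + t + t ^ 2 / (2 * (1 - t / 3)) := by
  have h13 : 0 < 1 - t / 3 := by linarith
  have h := Real.exp_bound' h0 h1 (n := 5) (by norm_num)
  simp only [Finset.sum_range_succ, Finset.sum_range_zero, Nat.factorial] at h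
  norm_num at h
  have key : t ^ 2 / 2 + t ^ 3 / 6 + t ^ 4 / 24 + t ^ 5 / 100 ≤ t ^ 2 / (2 * (1 - t / 3)) := by
    rw [le_div_iff₀ (by linarith : (0:ℝ) < 2 * (1 - t / 3))]
    nlinarith [pow_nonneg h0 4, pow_nonneg h0 5, pow_nonneg h0 6]
  nlinarith [h, key]

private lemma aux_exp_neg {t : ℝ} (h0 : 0 ≤ t) (h1 : t ≤ 1) :
    Real.exp (-t) ≤ 1 - t + t ^ 2 / (2 * (1 - t / 3)) := by
  have hs : t ≤ Real.sinh t := Real.self_le_sinh_iff.2 h0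
  rw [Real.sinh_eq] at hs
  have := aux_exp_pos h0 h1
  linarith

/-- **Bernstein bound for the Monte Carlo voting error (from the proof of Lemma 6).**
Given `p̂ : Θ → [0,1]` maximized at `θ_max` and i.i.d. random indicator vectors
`I^1,…,I^B ∈ {0,1}^Θ` with marginals `E[I_θ^b] = p̂(θ)` (no independence across `θ`
within one `b` is assumed), the empirical frequencies `p̄(θ) = (1/B)Σ_b I_θ^b` satisfy,
for every `θ`:
`P(p̄(θ) ≥ p̄(θ_max)) ≤ exp(−(B/6)·(p̂_max − p̂(θ))²/(min{p̂_max, 1−p̂_max} + p̂_max − p̂(θ)))`. -/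
theorem voting_bernstein_bound
    {Ω Θ : Type*} [MeasurableSpace Ω] [Fintype Θ] [Nonempty Θ]
    (μ : Measure Ω) [IsProbabilityMeasure μ]
    (B : ℕ) (hB : 0 < B)
    (phat : Θ → ℝ) (hphat01 : ∀ θ, phat θ ∈ Set.Icc (0 : ℝ) 1)
    (θmax : Θ) (hθmax : ∀ θ, phat θ ≤ phat θmax)
    -- the i.i.d. indicator vectors
    (I : Fin B → Ω → Θ → Bool)
    (hIm : ∀ b, Measurable (I b))
    (hiid : iIndepFun I μ)
    (hident : ∀ b b', Measure.map (I b) μ = Measure.map (I b') μ)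
    (hmarg : ∀ b θ, (μ {ω | I b ω θ = true}).toReal = phat θ)
    (θ : Θ) :
    (μ {ω | (B : ℝ)⁻¹ * ∑ b : Fin B, (if I b ω θ then (1 : ℝ) else 0) ≥
        (B : ℝ)⁻¹ * ∑ b : Fin B, (if I b ω θmax then (1 : ℝ) else 0)}).toReal ≤
      Real.exp (-((B : ℝ) / 6) * (phat θmax - phat θ) ^ 2 /
        (min (phat θmax) (1 - phat θmax) + (phat θmax - phat θ))) := by
  classical
  set Δ := phat θmax - phat θ with hΔdef
  set m := min (phat θmax) (1 - phat θmax) with hmdef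
  have hΔ0 : 0 ≤ Δ := sub_nonneg.2 (hθmax θ)
  have hm0 : 0 ≤ m := le_min (hphat01 θmax).1 (by linarith [(hphat01 θmax).2])
  have hP1 : (μ {ω | (B : ℝ)⁻¹ * ∑ b : Fin B, (if I b ω θ then (1 : ℝ) else 0) ≥
      (B : ℝ)⁻¹ * ∑ b : Fin B, (if I b ω θmax then (1 : ℝ) else 0)}).toReal ≤ 1 := by
    have h1 := prob_le_one (μ := μ) (s := {ω | (B : ℝ)⁻¹ * ∑ b : Fin B, (if I b ω θ then (1 : ℝ) else 0) ≥
      (B : ℝ)⁻¹ * ∑ b : Fin B, (if I b ω θmax then (1 : ℝ) else 0)})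
    simpa using ENNReal.toReal_mono ENNReal.one_ne_top h1
  rcases eq_or_lt_of_le hΔ0 with hΔz | hΔpos
  · have h0 : -((B : ℝ) / 6) * Δ ^ 2 / (m + Δ) = 0 := by rw [← hΔz]; simp
    rw [h0, Real.exp_zero]; exact hP1
  -- main case: 0 < Δ
  set t : ℝ := Δ / (2 * m + 4 * Δ / 3) with htdef
  have hd : 0 < 2 * m + 4 * Δ / 3 := by linarith
  have ht0 : 0 < t := div_pos hΔpos hd
  have ht1 : t ≤ 1 := by
    rw [htdef, div_le_one hd]; linarith
  have h13 : 0 < 1 - t / 3 := by linarith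
  set G : ℝ := t ^ 2 / (2 * (1 - t / 3)) with hGdef
  have hG0 : 0 ≤ G := div_nonneg (sq_nonneg t) (by linarith)
  -- the random variables
  set X : Fin B → Ω → ℝ :=
    fun b ω => (if I b ω θ then (1 : ℝ) else 0) - (if I b ω θmax then (1 : ℝ) else 0) with hXdef
  have hBm : ∀ (b : Fin B) (θ' : Θ), Measurable (fun ω => I b ω θ') := fun b θ' =>
    (measurable_pi_apply θ').comp (hIm b)
  have hms : ∀ (b : Fin B) (θ' : Θ), MeasurableSet {ω | I b ω θ' = true} := fun b θ' =>
    (hBm b θ') (MeasurableSet.singleton true)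
  have hJm : ∀ (b : Fin B) (θ' : Θ),
      Measurable (fun ω => if I b ω θ' then (1 : ℝ) else 0) := fun b θ' =>
    Measurable.ite (hms b θ') measurable_const measurable_const
  have hXm : ∀ b, Measurable (X b) := fun b => (hJm b θ).sub (hJm b θmax)
  -- independence of the X b
  have hXindep : iIndepFun X μ := by
    have := hiid.comp
      (fun b => fun v : Θ → Bool => (if v θ then (1 : ℝ) else 0) - (if v θmax then (1 : ℝ) else 0))
      (fun b => Measurable.of_discrete)
    exact this
  -- integral of indicators
  have hJeq : ∀ (b : Fin B) (θ' : Θ), (fun ω => if I b ω θ' then (1 : ℝ) else 0)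
      = Set.indicator {ω | I b ω θ' = true} (fun _ => (1 : ℝ)) := by
    intro b θ'; funext ω; by_cases h : I b ω θ' = true <;> simp [Set.indicator_apply, h]
  have hJint : ∀ (b : Fin B) (θ' : Θ),
      Integrable (fun ω => if I b ω θ' then (1 : ℝ) else 0) μ := by
    intro b θ'; rw [hJeq b θ']
    exact (integrable_const (1 : ℝ)).indicator (hms b θ')
  have hJ : ∀ (b : Fin B) (θ' : Θ),
      ∫ ω, (if I b ω θ' then (1 : ℝ) else 0) ∂μ = phat θ' := by
    intro b θ'
    rw [hJeq b θ']
    rw [show (fun _ : Ω => (1:ℝ)) = (1 : Ω → ℝ) from rfl]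
    rw [MeasureTheory.integral_indicator_one (hms b θ')]
    exact hmarg b θ'
  have hXint : ∀ b, Integrable (X b) μ := fun b => (hJint b θ).sub (hJint b θmax)
  have hEX : ∀ b, ∫ ω, X b ω ∂μ = -Δ := by
    intro b
    rw [hXdef]
    rw [integral_sub (hJint b θ) (hJint b θmax), hJ b θ, hJ b θmax, hΔdef]
    ring
  -- second moment
  have hX1 : ∀ b ω, X b ω ≤ 1 := by
    intro b ω
    by_cases h1 : I b ω θ = true <;> by_cases h2 : I b ω θmax = true <;>
      simp [hXdef, h1, h2] <;> norm_num
  have hXsq_int : ∀ b, Integrable (fun ω => (X b ω) ^ 2) μ := by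
    intro b
    refine Integrable.mono' (integrable_const (1 : ℝ))
      (((hXm b).pow_const 2).aestronglyMeasurable) (ae_of_all _ fun ω => ?_)
    rw [Real.norm_eq_abs, abs_of_nonneg (sq_nonneg _)]
    by_cases h1 : I b ω θ = true <;> by_cases h2 : I b ω θmax = true <;>
      simp [hXdef, h1, h2] <;> norm_num
  have hEXsq : ∀ b, ∫ ω, (X b ω) ^ 2 ∂μ ≤ 2 * m + Δ := by
    intro b
    have e1 : ∫ ω, (X b ω) ^ 2 ∂μ ≤ phat θ + phat θmax := by
      have hpt : ∀ ω, (X b ω) ^ 2 ≤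
          (if I b ω θ then (1 : ℝ) else 0) + (if I b ω θmax then (1 : ℝ) else 0) := by
        intro ω
        by_cases h1 : I b ω θ = true <;> by_cases h2 : I b ω θmax = true <;>
          simp [hXdef, h1, h2] <;> norm_num
      calc ∫ ω, (X b ω) ^ 2 ∂μ
          ≤ ∫ ω, ((if I b ω θ then (1 : ℝ) else 0) + (if I b ω θmax then (1 : ℝ) else 0)) ∂μ :=
            integral_mono (hXsq_int b) ((hJint b θ).add (hJint b θmax)) hpt
        _ = phat θ + phat θmax := by
            rw [integral_add (hJint b θ) (hJint b θmax), hJ b θ, hJ b θmax]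
    have e2 : ∫ ω, (X b ω) ^ 2 ∂μ ≤ 2 - phat θ - phat θmax := by
      have hpt : ∀ ω, (X b ω) ^ 2 ≤
          (1 - (if I b ω θ then (1 : ℝ) else 0)) + (1 - (if I b ω θmax then (1 : ℝ) else 0)) := by
        intro ω
        by_cases h1 : I b ω θ = true <;> by_cases h2 : I b ω θmax = true <;>
          simp [hXdef, h1, h2] <;> norm_num
      calc ∫ ω, (X b ω) ^ 2 ∂μ
          ≤ ∫ ω, ((1 - (if I b ω θ then (1 : ℝ) else 0))
              + (1 - (if I b ω θmax then (1 : ℝ) else 0))) ∂μ :=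
            integral_mono (hXsq_int b)
              (((integrable_const (1 : ℝ)).sub (hJint b θ)).add
                ((integrable_const (1 : ℝ)).sub (hJint b θmax))) hpt
        _ = 2 - phat θ - phat θmax := by
            have hrw : (fun ω => (1 - (if I b ω θ then (1 : ℝ) else 0))
                + (1 - (if I b ω θmax then (1 : ℝ) else 0)))
                = fun ω => (2 : ℝ) - ((if I b ω θ then (1 : ℝ) else 0)
                  + (if I b ω θmax then (1 : ℝ) else 0)) := by
              funext ω; ring
            have hi2 : Integrable (fun ω => ((if I b ω θ then (1 : ℝ) else 0)
                + (if I b ω θmax then (1 : ℝ) else 0))) μ := (hJint b θ).add (hJint b θmax)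
            rw [hrw, integral_sub (integrable_const (2 : ℝ)) hi2,
              integral_add (hJint b θ) (hJint b θmax), hJ b θ, hJ b θmax, integral_const]
            simp
            ring
    rcases min_le_iff.mp (le_refl m) with _ | _
    all_goals rcases min_cases (phat θmax) (1 - phat θmax) with ⟨hmm, _⟩ | ⟨hmm, _⟩ <;>
      rw [hmdef, hmm] <;> [skip; skip] <;> first
        | (rw [hΔdef]; linarith)
        | linarith [hΔdef]
  -- per-sample mgf bound
  have hintexp : ∀ b, Integrable (fun ω => Real.exp (t * X b ω)) μ := by
    intro b
    refine Integrable.mono' (integrable_const (Real.exp t))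
      (((hXm b).const_mul t).exp.aestronglyMeasurable) (ae_of_all _ fun ω => ?_)
    rw [Real.norm_eq_abs, abs_of_pos (Real.exp_pos _), Real.exp_le_exp]
    nlinarith [hX1 b ω, ht0.le]
  have hmgf_le : ∀ b, mgf (X b) μ t ≤ Real.exp (-(t * Δ) + G * (2 * m + Δ)) := by
    intro b
    have hpt : ∀ ω, Real.exp (t * X b ω) ≤ 1 + t * X b ω + G * (X b ω) ^ 2 := by
      intro ω
      have ha := aux_exp_pos ht0.le ht1
      have hb := aux_exp_neg ht0.le ht1
      rw [← hGdef] at ha hb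
      by_cases h1 : I b ω θ = true <;> by_cases h2 : I b ω θmax = true <;>
        simp [hXdef, h1, h2] <;> linarith
    have hint2 : Integrable (fun ω => 1 + t * X b ω + G * (X b ω) ^ 2) μ :=
      ((integrable_const 1).add ((hXint b).const_mul t)).add ((hXsq_int b).const_mul G)
    have hint1 : Integrable (fun ω => (1 : ℝ) + t * X b ω) μ :=
      (integrable_const 1).add ((hXint b).const_mul t)
    calc mgf (X b) μ t = ∫ ω, Real.exp (t * X b ω) ∂μ := rfl
      _ ≤ ∫ ω, (1 + t * X b ω + G * (X b ω) ^ 2) ∂μ :=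
          integral_mono (hintexp b) hint2 hpt
      _ = 1 + t * (-Δ) + G * ∫ ω, (X b ω) ^ 2 ∂μ := by
          rw [integral_add hint1 ((hXsq_int b).const_mul G),
            integral_add (integrable_const 1) ((hXint b).const_mul t),
            integral_const_mul, integral_const_mul, hEX b, integral_const]
          simp
      _ ≤ 1 + (-(t * Δ) + G * (2 * m + Δ)) := by
          nlinarith [hEXsq b, hG0]
      _ ≤ Real.exp (-(t * Δ) + G * (2 * m + Δ)) := by
          rw [add_comm]
          exact Real.add_one_le_exp _
  -- the event
  have hset : {ω | (B : ℝ)⁻¹ * ∑ b : Fin B, (if I b ω θ then (1 : ℝ) else 0) ≥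
        (B : ℝ)⁻¹ * ∑ b : Fin B, (if I b ω θmax then (1 : ℝ) else 0)}
      = {ω | (0 : ℝ) ≤ (∑ b : Fin B, X b) ω} := by
    ext ω
    have hBpos : (0 : ℝ) < (B : ℝ)⁻¹ := by positivity
    simp only [Set.mem_setOf_eq, ge_iff_le, Finset.sum_apply, hXdef]
    rw [Finset.sum_sub_distrib, mul_le_mul_iff_right₀ hBpos, ← sub_nonneg]
  have hSint : Integrable (fun ω => Real.exp (t * (∑ b : Fin B, X b) ω)) μ :=
    hXindep.integrable_exp_mul_sum hXm (fun b _ => hintexp b)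
  have hkey : -(t * Δ) + G * (2 * m + Δ) ≤ -(Δ ^ 2 / (6 * (m + Δ))) := by
    rw [hGdef, htdef]
    exact aux_key hΔpos hm0
  calc (μ {ω | (B : ℝ)⁻¹ * ∑ b : Fin B, (if I b ω θ then (1 : ℝ) else 0) ≥
        (B : ℝ)⁻¹ * ∑ b : Fin B, (if I b ω θmax then (1 : ℝ) else 0)}).toReal
      = (μ {ω | (0 : ℝ) ≤ (∑ b : Fin B, X b) ω}).toReal := by rw [hset]
    _ ≤ Real.exp (-t * 0) * mgf (∑ b : Fin B, X b) μ t :=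
        measure_ge_le_exp_mul_mgf 0 ht0.le hSint
    _ = ∏ b : Fin B, mgf (X b) μ t := by
        rw [hXindep.mgf_sum hXm]; simp
    _ ≤ ∏ _b : Fin B, Real.exp (-(t * Δ) + G * (2 * m + Δ)) :=
        Finset.prod_le_prod (fun b _ => mgf_nonneg) (fun b _ => hmgf_le b)
    _ = Real.exp ((B : ℝ) * (-(t * Δ) + G * (2 * m + Δ))) := by
        rw [Finset.prod_const, Finset.card_univ, Fintype.card_fin, ← Real.exp_nat_mul]
    _ ≤ Real.exp (-((B : ℝ) / 6) * Δ ^ 2 / (m + Δ)) := by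
        rw [Real.exp_le_exp]
        calc (B : ℝ) * (-(t * Δ) + G * (2 * m + Δ))
            ≤ (B : ℝ) * (-(Δ ^ 2 / (6 * (m + Δ)))) :=
              mul_le_mul_of_nonneg_left hkey (Nat.cast_nonneg B)
          _ = -((B : ℝ) / 6) * Δ ^ 2 / (m + Δ) :=
              aux_key2 (B : ℝ) Δ m (ne_of_gt (by linarith))
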